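/- In the q-Weyl algebra over R = ℚ[ε]/(ε²) with q = 1 + ε and relation FE = qEF + 1, for all naturals a, b: F^b E^a = ∑_j ([a]![b]! / ([a-j]![j]![b-j]!)) · E^{a-j}(1 + jε·EF) F^{b-j}, where [k] = k(1 + ε(k-1)/2) and [m]! = m!(1 + ε·m(m-1)/4). -/

import Mathlib

open DualNumber

/-- The defining relation of the q-Weyl algebra over `R = ℚ[ε]/(ε²)` with
`q = 1 + ε`: `F * E = q E F + 1`, where `E` is the image of `true` and `F` the
image of `false`. -/
inductive QWeylRel : FreeAlgebra (DualNumber ℚ) Bool → FreeAlgebra (DualNumber ℚ) Bool → Prop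
  | rel : QWeylRel
      (FreeAlgebra.ι (DualNumber ℚ) false * FreeAlgebra.ι (DualNumber ℚ) true)
      (((1 : DualNumber ℚ) + ε) •
        (FreeAlgebra.ι (DualNumber ℚ) true * FreeAlgebra.ι (DualNumber ℚ) false) + 1)

/-- The q-Weyl algebra over `ℚ[ε]/(ε²)`, `q = 1 + ε`. -/
abbrev QWeyl : Type := RingQuot QWeylRel

noncomputable def QWeyl.E : QWeyl :=
  RingQuot.mkAlgHom (DualNumber ℚ) QWeylRel (FreeAlgebra.ι (DualNumber ℚ) true)
noncomputable def QWeyl.F : QWeyl :=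
  RingQuot.mkAlgHom (DualNumber ℚ) QWeylRel (FreeAlgebra.ι (DualNumber ℚ) false)

/-- The q-factorial `[m]! = m!(1 + ε m(m-1)/4)` in `ℚ[ε]/(ε²)`. -/
noncomputable def qFact (m : ℕ) : DualNumber ℚ :=
  (m.factorial : DualNumber ℚ) * (1 + (((m : ℚ) * ((m : ℚ) - 1)) / 4) • ε)

namespace QW
open QWeyl

theorem sAdd (r : DualNumber ℚ) (x y : QWeyl) : r • (x + y) = r • x + r • y := smul_add r x y
theorem sSmul (r s : DualNumber ℚ) (x : QWeyl) : r • s • x = (r * s) • x := smul_smul r s x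
theorem sOne (x : QWeyl) : (1 : DualNumber ℚ) • x = x := one_smul (DualNumber ℚ) x
theorem sZero (x : QWeyl) : (0 : DualNumber ℚ) • x = 0 := zero_smul (DualNumber ℚ) x
theorem saddSmul (r s : DualNumber ℚ) (x : QWeyl) : (r + s) • x = r • x + s • x := add_smul r s x
theorem ssumSmul {ι : Type*} (t : Finset ι) (f : ι → DualNumber ℚ) (x : QWeyl) :
    (∑ i ∈ t, f i) • x = ∑ i ∈ t, f i • x := Finset.sum_smul (s := t) (f := f) (x := x)
theorem sAlg (r : DualNumber ℚ) (x : QWeyl) :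
    r • x = algebraMap (DualNumber ℚ) QWeyl r * x := Algebra.smul_def r x

instance : IsScalarTower (DualNumber ℚ) QWeyl QWeyl :=
  ⟨fun s x y => by
    rcases x with ⟨x⟩; rcases y with ⟨y⟩
    induction x using Quot.inductionOn with | h x =>
    induction y using Quot.inductionOn with | h y =>
    show (s • (⟨Quot.mk _ x⟩ : QWeyl)) * ⟨Quot.mk _ y⟩ = s • ((⟨Quot.mk _ x⟩ : QWeyl) * ⟨Quot.mk _ y⟩)
    simp only [RingQuot.smul_quot, RingQuot.mul_quot, smul_mul_assoc]⟩
instance : SMulCommClass (DualNumber ℚ) QWeyl QWeyl :=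
  ⟨fun s x y => by
    rcases x with ⟨x⟩; rcases y with ⟨y⟩
    induction x using Quot.inductionOn with | h x =>
    induction y using Quot.inductionOn with | h y =>
    show s • ((⟨Quot.mk _ x⟩ : QWeyl) * ⟨Quot.mk _ y⟩) = (⟨Quot.mk _ x⟩ : QWeyl) * (s • (⟨Quot.mk _ y⟩ : QWeyl))
    simp only [RingQuot.smul_quot, RingQuot.mul_quot, mul_smul_comm]⟩

noncomputable def q : DualNumber ℚ := 1 + ε
noncomputable def qInt (n : ℕ) : DualNumber ℚ :=
  (n : DualNumber ℚ) * (1 + (((n : ℚ) - 1) / 2) • ε)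

theorem rel : F * E = q • (E * F) + 1 := by
  have h := RingQuot.mkAlgHom_rel (DualNumber ℚ) QWeylRel.rel
  simpa only [map_add, map_mul, map_smul, map_one, q, E, F] using h

theorem q_pow (n : ℕ) : q ^ n = 1 + (n : ℚ) • ε := by
  induction n with
  | zero => simp
  | succ k ih =>
    rw [pow_succ, ih, q]; ext
    · simp
    · simp; ring

theorem qInt_zero : qInt 0 = 0 := by simp [qInt]

theorem qInt_succ (k : ℕ) : qInt (k+1) = q^k + qInt k := by
  rw [q_pow]; ext
  · simp [qInt]; ring
  · simp [qInt]; push_cast; ring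

theorem FEpow (n : ℕ) : F * E ^ (n+1) =
    q^(n+1) • (E^(n+1) * F) + qInt (n+1) • E^n := by
  induction n with
  | zero =>
    have h1 : qInt 1 = 1 := by ext <;> simp [qInt]
    rw [pow_one, pow_one, pow_zero, h1, sOne, rel]
  | succ k ih =>
    have h0 : F * E ^ (k+2) = (F * E ^ (k+1)) * E := by rw [mul_assoc, ← pow_succ]
    rw [h0, ih, add_mul, smul_mul_assoc, smul_mul_assoc, mul_assoc, ← pow_succ, rel,
      mul_add, mul_one, mul_smul_comm, ← mul_assoc, ← pow_succ,
      sAdd, sSmul, ← pow_succ, qInt_succ (k+1), saddSmul]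
    abel

theorem FEpow' (n : ℕ) : F * E ^ n =
    q^n • (E^n * F) + qInt n • E^(n-1) := by
  cases n with
  | zero => rw [pow_zero, pow_zero, qInt_zero, sZero, mul_one, one_mul, sOne, add_zero]
  | succ k => exact FEpow k

theorem eps_mul_q_pow (r : ℚ) (n : ℕ) : (r • ε) * q^n = r • ε := by
  rw [q_pow]; ext <;> simp

theorem eps_mul_qInt (r : ℚ) (n : ℕ) : (r • ε) * qInt n = (r * (n:ℚ)) • ε := by
  ext
  · simp [qInt]
  · simp [qInt]

theorem epsFE (r : ℚ) (n : ℕ) : ((r • ε : DualNumber ℚ)) • (F * E^n) =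
    ((r • ε : DualNumber ℚ)) • (E^n * F) + ((r * (n:ℚ)) • ε : DualNumber ℚ) • E^(n-1) := by
  rw [FEpow', sAdd, sSmul, sSmul, eps_mul_q_pow, eps_mul_qInt]

theorem Fterm (n m j : ℕ) :
    F * (E^n * (1 + ((j:ℚ) • ε : DualNumber ℚ) • (E * F)) * F^m) =
      (q^n + ((j:ℚ) * ((n:ℚ) + 1)) • ε) • (E^n * F^(m+1))
      + qInt n • (E^(n-1) * F^m)
      + ((j:ℚ) • ε : DualNumber ℚ) • (E^(n+1) * F^(m+2)) := by
  have hA : E^n * (1 + ((j:ℚ) • ε : DualNumber ℚ) • (E * F)) * F^m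
      = E^n * F^m + ((j:ℚ) • ε : DualNumber ℚ) • (E^(n+1) * F^(m+1)) := by
    rw [mul_add, mul_one, mul_smul_comm, add_mul, smul_mul_assoc, ← mul_assoc, ← pow_succ,
      mul_assoc, ← pow_succ']
  rw [hA, mul_add, mul_smul_comm, ← mul_assoc, FEpow', ← mul_assoc,
    ← smul_mul_assoc ((j:ℚ) • ε : DualNumber ℚ) (F * E^(n+1)) (F^(m+1)), epsFE]
  simp only [add_mul, smul_mul_assoc, mul_assoc, ← pow_succ', Nat.add_sub_cancel]
  have e2 : ((j:ℚ) * ((n:ℚ) + 1)) = (j:ℚ) * ((n+1 : ℕ):ℚ) := by push_cast; ring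
  rw [e2, saddSmul]
  abel

noncomputable def G (a b j : ℕ) : DualNumber ℚ :=
  ((a.choose j * b.choose j * j.factorial : ℕ) : DualNumber ℚ) *
    (1 + (((j : ℚ) * (2*(a:ℚ) + 2*(b:ℚ) - 3*(j:ℚ) - 1)) / 4) • ε)

noncomputable def shiftG (a b : ℕ) : ℕ → DualNumber ℚ
  | 0 => 0
  | (i+1) => G a b i * qInt (a - i)

theorem G_eq_zero {a b j : ℕ} (h : min a b < j) : G a b j = 0 := by
  rcases min_lt_iff.mp h with h' | h'
  · simp [G, Nat.choose_eq_zero_of_lt h']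
  · simp [G, Nat.choose_eq_zero_of_lt h']

theorem G_zero (a b : ℕ) : G a b 0 = 1 := by
  ext <;> simp [G]

set_option maxHeartbeats 1600000 in
theorem star (a b i : ℕ) :
    G a b i * (q^(a-i) + ((i:ℚ) * (((a-i : ℕ):ℚ) + 1)) • ε) + shiftG a b i
      + G a b (i+1) * (((i+1:ℕ):ℚ) • ε)
    = G a (b+1) i + G a (b+1) (i+1) * (((i+1:ℕ):ℚ) • ε) := by
  cases i with
  | zero =>
    rw [G_zero, G_zero, shiftG, q_pow]
    ext
    · simp [G]
    · simp [G]; push_cast; ring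
  | succ k =>
    have hsh : shiftG a b (k+1) = G a b k * qInt (a-k) := rfl
    rw [hsh]
    by_cases hak : a ≤ k
    · have h1 : G a b (k+1) = 0 := G_eq_zero (by omega)
      have h2 : G a b (k+1+1) = 0 := G_eq_zero (by omega)
      have h3 : G a (b+1) (k+1) = 0 := G_eq_zero (by omega)
      have h4 : G a (b+1) (k+1+1) = 0 := G_eq_zero (by omega)
      have h5 : a - k = 0 := by omega
      rw [h1, h2, h3, h4, h5, qInt_zero]
      simp
    · push_neg at hak
      have e1 : ((k:ℚ)+1) ≠ 0 := by positivity
      have e2 : ((k:ℚ)+2) ≠ 0 := by positivity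
      have ha0 : ((a - k : ℕ) : ℚ) = (a:ℚ) - (k:ℚ) := by
        rw [Nat.cast_sub (by omega)]
      have ha1 : ((a - (k+1) : ℕ) : ℚ) = (a:ℚ) - (k:ℚ) - 1 := by
        rw [Nat.cast_sub (by omega)]; push_cast; ring
      have r1 : ((a.choose (k+1)) : ℚ) = (a.choose k : ℚ) * ((a:ℚ)-(k:ℚ)) / ((k:ℚ)+1) := by
        rw [eq_div_iff e1]
        have := Nat.choose_succ_right_eq a k
        have h := congrArg (fun x : ℕ => (x : ℚ)) this
        push_cast at h
        rw [ha0] at h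
        linarith [h]
      have r2 : ((a.choose (k+1+1)) : ℚ)
          = (a.choose (k+1) : ℚ) * ((a:ℚ)-(k:ℚ)-1) / ((k:ℚ)+2) := by
        rw [eq_div_iff e2]
        have := Nat.choose_succ_right_eq a (k+1)
        have h := congrArg (fun x : ℕ => (x : ℚ)) this
        push_cast at h
        rw [ha1] at h
        linarith [h]
      have p1 : (((b+1).choose (k+1)) : ℚ) = (b.choose (k+1) : ℚ) + (b.choose k : ℚ) := by
        rw [Nat.choose_succ_succ]; push_cast; ring
      have p2 : (((b+1).choose (k+1+1)) : ℚ) = (b.choose (k+1+1) : ℚ) + (b.choose (k+1) : ℚ) := by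
        rw [Nat.choose_succ_succ]; push_cast; ring
      have f1 : (((k+1).factorial) : ℚ) = ((k:ℚ)+1) * (k.factorial : ℚ) := by
        rw [Nat.factorial_succ]; push_cast; ring
      have f2 : (((k+1+1).factorial) : ℚ) = ((k:ℚ)+2) * (((k+1).factorial) : ℚ) := by
        rw [Nat.factorial_succ (k+1)]; push_cast; ring
      by_cases hbk : k < b
      · have hb0 : ((b - k : ℕ) : ℚ) = (b:ℚ) - (k:ℚ) := by
          rw [Nat.cast_sub (by omega)]
        have hb1 : ((b - (k+1) : ℕ) : ℚ) = (b:ℚ) - (k:ℚ) - 1 := by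
          rw [Nat.cast_sub (by omega)]; push_cast; ring
        have r3 : ((b.choose (k+1)) : ℚ) = (b.choose k : ℚ) * ((b:ℚ)-(k:ℚ)) / ((k:ℚ)+1) := by
          rw [eq_div_iff e1]
          have := Nat.choose_succ_right_eq b k
          have h := congrArg (fun x : ℕ => (x : ℚ)) this
          push_cast at h
          rw [hb0] at h
          linarith [h]
        have r4 : ((b.choose (k+1+1)) : ℚ)
            = (b.choose (k+1) : ℚ) * ((b:ℚ)-(k:ℚ)-1) / ((k:ℚ)+2) := by
          rw [eq_div_iff e2]
          have := Nat.choose_succ_right_eq b (k+1)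
          have h := congrArg (fun x : ℕ => (x : ℚ)) this
          push_cast at h
          rw [hb1] at h
          linarith [h]
        ext
        · simp [G, qInt, q_pow]
          push_cast
          simp only [ha0, ha1, f2, f1, p2, p1, r4, r3, r2, r1]
          field_simp
        · simp [G, qInt, q_pow]
          push_cast
          simp only [ha0, ha1, f2, f1, p2, p1, r4, r3, r2, r1]
          field_simp
          ring
      · by_cases hbe : b = k
        · subst hbe
          have h1 : G a b (b+1) = 0 := G_eq_zero (by omega)
          have h2 : G a b (b+1+1) = 0 := G_eq_zero (by omega)
          have h4 : G a (b+1) (b+1+1) = 0 := G_eq_zero (by omega)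
          rw [h1, h2, h4]
          ext
          · simp [G, qInt, q_pow]
            push_cast
            simp only [Nat.choose_self, Nat.cast_one, ha0, ha1, f1, r1]
            field_simp
          · simp [G, qInt, q_pow]
            push_cast
            simp only [Nat.choose_self, Nat.cast_one, ha0, ha1, f1, r1]
            field_simp
            ring
        · have hkb : b < k := by omega
          have h1 : G a b (k+1) = 0 := G_eq_zero (by omega)
          have h2 : G a b (k+1+1) = 0 := G_eq_zero (by omega)
          have h3 : G a (b+1) (k+1) = 0 := G_eq_zero (by omega)
          have h4 : G a (b+1) (k+1+1) = 0 := G_eq_zero (by omega)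
          have h5 : G a b k = 0 := G_eq_zero (by omega)
          rw [h1, h2, h3, h4, h5]
          simp

theorem qFact_isUnit (m : ℕ) : IsUnit (qFact m) := by
  apply IsUnit.of_mul_eq_one (a := _)
    (((m.factorial : ℚ)⁻¹ : ℚ) • (1 - (((m : ℚ) * ((m : ℚ) - 1)) / 4) • ε))
  have hm : (m.factorial : ℚ) ≠ 0 := by
    exact_mod_cast m.factorial_ne_zero
  ext
  · simp [qFact]
    field_simp
  · simp [qFact]

theorem gamma_eq {a b j : ℕ} (hja : j ≤ a) (hjb : j ≤ b) :
    qFact a * qFact b * Ring.inverse (qFact (a - j) * qFact j * qFact (b - j)) = G a b j := by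
  have hu : IsUnit (qFact (a - j) * qFact j * qFact (b - j)) :=
    ((qFact_isUnit (a-j)).mul (qFact_isUnit j)).mul (qFact_isUnit (b-j))
  have hkey : qFact a * qFact b = G a b j * (qFact (a - j) * qFact j * qFact (b - j)) := by
    have ha0 : ((a - j : ℕ) : ℚ) = (a:ℚ) - (j:ℚ) := by rw [Nat.cast_sub hja]
    have hb0 : ((b - j : ℕ) : ℚ) = (b:ℚ) - (j:ℚ) := by rw [Nat.cast_sub hjb]
    have hca : ((a.choose j):ℚ) = (a.factorial : ℚ)/((j.factorial : ℚ) * (((a-j).factorial) : ℚ)) :=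
      Nat.cast_choose ℚ hja
    have hcb : ((b.choose j):ℚ) = (b.factorial : ℚ)/((j.factorial : ℚ) * (((b-j).factorial) : ℚ)) :=
      Nat.cast_choose ℚ hjb
    have n1 : ((j.factorial):ℚ) ≠ 0 := by exact_mod_cast j.factorial_ne_zero
    have n2 : (((a-j).factorial):ℚ) ≠ 0 := by exact_mod_cast (a-j).factorial_ne_zero
    have n3 : (((b-j).factorial):ℚ) ≠ 0 := by exact_mod_cast (b-j).factorial_ne_zero
    ext
    · simp [qFact, G]
      push_cast
      simp only [ha0, hb0, hca, hcb]
      field_simp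
    · simp [qFact, G]
      push_cast
      simp only [ha0, hb0, hca, hcb]
      field_simp
      ring
  rw [hkey, mul_assoc, Ring.mul_inverse_cancel _ hu, mul_one]

theorem key (a b : ℕ) : QWeyl.F ^ b * QWeyl.E ^ a =
    ∑ j ∈ Finset.range (min a b + 1), G a b j •
      (E^(a-j) * (1 + ((j:ℚ) • ε : DualNumber ℚ) • (E * F)) * F^(b-j)) := by
  induction b with
  | zero =>
    rw [Nat.min_zero, Finset.sum_range_one, G_zero, sOne]
    simp [sZero]
  | succ b ih =>
    have hNb : min a b + 1 ≤ min a b + 2 := by omega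
    have hNb1 : min a (b+1) + 1 ≤ min a b + 2 := by omega
    have hext : ∀ (c K₁ K₂ : ℕ) (X : ℕ → QWeyl), min a c + 1 ≤ K₁ → min a c + 1 ≤ K₂ →
        (∑ j ∈ Finset.range K₁, G a c j • X j) = ∑ j ∈ Finset.range K₂, G a c j • X j := by
      intro c K₁ K₂ X h₁ h₂
      have hgen : ∀ K, min a c + 1 ≤ K →
          (∑ j ∈ Finset.range K, G a c j • X j)
            = ∑ j ∈ Finset.range (min a c + 1), G a c j • X j := by
        intro K hK
        refine (Finset.sum_subset (Finset.range_subset_range.mpr hK) ?_).symm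
        intro j _ hj
        have hj' : min a c < j := by simp [Finset.mem_range] at hj; omega
        rw [G_eq_zero hj', sZero]
      rw [hgen K₁ h₁, hgen K₂ h₂]
    have hS3 : ∀ (c : ℕ → DualNumber ℚ), (c (min a b + 2) = 0) → (∀ j, a ≤ j → c (j+1) = 0) →
        (∑ j ∈ Finset.range (min a b + 2), (c j * ((j:ℚ) • ε)) • (E^(a-j+1) * F^(b+2-j)))
        = ∑ i ∈ Finset.range (min a b + 2),
            (c (i+1) * (((i+1:ℕ):ℚ) • ε)) • (E^(a-i) * F^(b+1-i)) := by
      intro c hc1 hc2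
      have h := Finset.sum_range_succ'
        (fun j => (c j * ((j:ℚ) • ε)) • (E^(a-j+1) * F^(b+2-j))) (min a b + 1)
      have h0 : (c 0 * (((0:ℕ):ℚ) • ε)) • (E^(a-0+1) * F^(b+2-0)) = 0 := by
        norm_num
        rw [sZero]
      rw [h0, add_zero] at h
      have htop := Finset.sum_range_succ
        (fun i => (c (i+1) * (((i+1:ℕ):ℚ) • ε)) • (E^(a-i) * F^(b+1-i))) (min a b + 1)
      have htop0 : (c (min a b + 1 + 1) * (((min a b + 1 + 1:ℕ):ℚ) • ε))
          • (E^(a-(min a b + 1)) * F^(b+1-(min a b + 1))) = 0 := by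
        rw [show min a b + 1 + 1 = min a b + 2 from rfl, hc1, zero_mul, sZero]
      rw [h, htop, htop0, add_zero]
      refine Finset.sum_congr rfl (fun j hj => ?_)
      by_cases hja : j < a
      · have e1 : a-(j+1)+1 = a - j := by omega
        have e2 : b+2-(j+1) = b+1-j := by omega
        rw [e1, e2]
      · rw [hc2 j (by omega), zero_mul, sZero, sZero]
    have hRHS : (∑ j ∈ Finset.range (min a (b+1) + 1), G a (b+1) j •
          (E^(a-j) * (1 + ((j:ℚ) • ε : DualNumber ℚ) • (E * F)) * F^(b+1-j)))
        = (∑ j ∈ Finset.range (min a b + 2), G a (b+1) j • (E^(a-j) * F^(b+1-j)))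
          + ∑ j ∈ Finset.range (min a b + 2),
              (G a (b+1) j * ((j:ℚ) • ε)) • (E^(a-j+1) * F^(b+2-j)) := by
      rw [hext (b+1) (min a (b+1) + 1) (min a b + 2) _ (le_refl _) hNb1,
        ← Finset.sum_add_distrib]
      refine Finset.sum_congr rfl (fun k hk => ?_)
      have hk' : k ≤ b + 1 := by simp [Finset.mem_range] at hk; omega
      have hA : E^(a-k) * (1 + ((k:ℚ) • ε : DualNumber ℚ) • (E * F)) * F^(b+1-k)
          = E^(a-k) * F^(b+1-k) + ((k:ℚ) • ε : DualNumber ℚ) • (E^(a-k+1) * F^(b+1-k+1)) := by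
        rw [mul_add, mul_one, mul_smul_comm, add_mul, smul_mul_assoc, ← mul_assoc, ← pow_succ,
          mul_assoc, ← pow_succ']
      have e2 : b+1-k+1 = b+2-k := by omega
      rw [hA, e2, sAdd, sSmul]
    rw [hRHS]
    calc F ^ (b+1) * E ^ a = F * (F^b * E^a) := by rw [pow_succ', mul_assoc]
      _ = ∑ j ∈ Finset.range (min a b + 2), G a b j •
            (F * (E^(a-j) * (1 + ((j:ℚ) • ε : DualNumber ℚ) • (E * F)) * F^(b-j))) := by
          rw [ih, Finset.mul_sum]
          simp only [mul_smul_comm]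
          exact hext b (min a b + 1) (min a b + 2) _ (le_refl _) hNb
      _ = ∑ j ∈ Finset.range (min a b + 2),
            ((G a b j * (q^(a-j) + ((j:ℚ) * (((a-j : ℕ):ℚ) + 1)) • ε)) • (E^(a-j) * F^(b+1-j))
            + (G a b j * qInt (a-j)) • (E^(a-(j+1)) * F^(b+1-(j+1)))
            + (G a b j * ((j:ℚ) • ε)) • (E^(a-j+1) * F^(b+2-j))) := by
          refine Finset.sum_congr rfl (fun j hj => ?_)
          by_cases hgb : min a b < j
          · rw [G_eq_zero hgb]
            simp [sZero]
          · push_neg at hgb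
            have e1 : b - j + 1 = b + 1 - j := by omega
            have e2 : (a - j) - 1 = a - (j+1) := by omega
            have e3 : b - j = b + 1 - (j+1) := by omega
            have e4 : b - j + 2 = b + 2 - j := by omega
            rw [Fterm (a-j) (b-j) j, e1, e2, e4, sAdd, sAdd, sSmul, sSmul, sSmul]
            rw [show b - j = b + 1 - (j+1) from e3]
      _ = (∑ j ∈ Finset.range (min a b + 2),
            (G a b j * (q^(a-j) + ((j:ℚ) * (((a-j : ℕ):ℚ) + 1)) • ε)) • (E^(a-j) * F^(b+1-j)))
          + (∑ j ∈ Finset.range (min a b + 2),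
            (G a b j * qInt (a-j)) • (E^(a-(j+1)) * F^(b+1-(j+1))))
          + (∑ j ∈ Finset.range (min a b + 2),
            (G a b j * ((j:ℚ) • ε)) • (E^(a-j+1) * F^(b+2-j))) := by
          rw [← Finset.sum_add_distrib, ← Finset.sum_add_distrib]
      _ = (∑ j ∈ Finset.range (min a b + 2),
            (G a b j * (q^(a-j) + ((j:ℚ) * (((a-j : ℕ):ℚ) + 1)) • ε)) • (E^(a-j) * F^(b+1-j)))
          + (∑ i ∈ Finset.range (min a b + 2), shiftG a b i • (E^(a-i) * F^(b+1-i)))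
          + (∑ i ∈ Finset.range (min a b + 2),
            (G a b (i+1) * (((i+1:ℕ):ℚ) • ε)) • (E^(a-i) * F^(b+1-i))) := by
          congr 1
          · congr 1
            have h := Finset.sum_range_succ'
              (fun i => shiftG a b i • (E^(a-i) * F^(b+1-i))) (min a b + 2)
            rw [Finset.sum_range_succ
              (fun i => shiftG a b i • (E^(a-i) * F^(b+1-i))) (min a b + 2)] at h
            have h0 : shiftG a b 0 • (E^(a-0) * F^(b+1-0)) = 0 := by
              rw [show shiftG a b 0 = 0 from rfl, sZero]
            have hN0 : shiftG a b (min a b + 2) • (E^(a-(min a b + 2)) * F^(b+1-(min a b + 2)))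
                = 0 := by
              rw [show shiftG a b (min a b + 2)
                  = G a b (min a b + 1) * qInt (a - (min a b + 1)) from rfl,
                G_eq_zero (by omega), zero_mul, sZero]
            rw [h0, add_zero, hN0, add_zero] at h
            exact h.symm
          · exact hS3 (fun j => G a b j) (G_eq_zero (by omega)) (fun j hj => G_eq_zero (by omega))
    rw [hS3 (fun j => G a (b+1) j) (G_eq_zero (by omega)) (fun j hj => G_eq_zero (by omega)),
      ← Finset.sum_add_distrib, ← Finset.sum_add_distrib, ← Finset.sum_add_distrib]
    refine Finset.sum_congr rfl (fun i hi => ?_)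
    rw [← saddSmul, ← saddSmul, ← saddSmul]
    exact congrArg (· • (E^(a-i) * F^(b+1-i))) (star a b i)

end QW

/-- In the q-Weyl algebra over `ℚ[ε]/(ε²)` with `q = 1 + ε`:
`F^b E^a = ∑_j ([a]![b]!/([a-j]![j]![b-j]!)) E^{a-j} (1 + jε EF) F^{b-j}`. -/
theorem qweyl_normal_order (a b : ℕ) :
    QWeyl.F ^ b * QWeyl.E ^ a =
      ∑ j ∈ Finset.range (min a b + 1),
        algebraMap (DualNumber ℚ) QWeyl
            (qFact a * qFact b *
              Ring.inverse (qFact (a - j) * qFact j * qFact (b - j))) *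
          (QWeyl.E ^ (a - j) *
            (1 + (j : QWeyl) * algebraMap (DualNumber ℚ) QWeyl ε *
              (QWeyl.E * QWeyl.F)) *
            QWeyl.F ^ (b - j)) := by
  rw [QW.key a b]
  refine Finset.sum_congr rfl (fun j hj => ?_)
  have hj' : j ≤ min a b := by simp [Finset.mem_range] at hj; omega
  rw [QW.gamma_eq (le_trans hj' (min_le_left a b)) (le_trans hj' (min_le_right a b))]
  have hc : ((j:QWeyl)) * algebraMap (DualNumber ℚ) QWeyl ε
      = algebraMap (DualNumber ℚ) QWeyl ((j:ℚ) • ε) := by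
    rw [← map_natCast (algebraMap (DualNumber ℚ) QWeyl) j, ← map_mul]
    congr 1
    ext <;> simp
  rw [QW.sAlg (QW.G a b j), hc, ← QW.sAlg ((j:ℚ) • ε) (QWeyl.E * QWeyl.F)]
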